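/- Define the feasibility polytope X = {p ∈ ℝ^T : P̲ ⪯ p ⪯ P̄, S̲ ⪯ Hp ⪯ S̄}, where H is the cumulative-sum matrix. If X ≠ ∅ then B̲ ⪯ B̄, where B̲_t = C̄_t + max_{τ≥t}(S̲_τ − C̄_τ), B̄_t = C̲_t + min_{τ≥t}(S̄_τ − C̲_τ), C̲ = H P̲, C̄ = H P̄, assuming the necessary conditions P̲ ⪯ P̄ and C̲ ⪯ S̲ ⪯ S̄ ⪯ C̄ hold. -/
import Mathlib

/-- Cumulative sum: `(Hp)_t = ∑_{τ ≤ t} p_τ`. -/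
def cumsum {T : ℕ} (p : Fin T → ℝ) (t : Fin T) : ℝ := ∑ τ ∈ Finset.Iic t, p τ

/-- Lower envelope `B̲_t = C̄_t + max_{τ≥t}(S̲_τ − C̄_τ)` with `C̄ = H P̄`. -/
def Blo {T : ℕ} (Phi Slo : Fin T → ℝ) (t : Fin T) : ℝ :=
  cumsum Phi t + (Finset.Ici t).sup' Finset.nonempty_Ici (fun τ => Slo τ - cumsum Phi τ)

/-- Upper envelope `B̄_t = C̲_t + min_{τ≥t}(S̄_τ − C̲_τ)` with `C̲ = H P̲`. -/
def Bhi {T : ℕ} (Plo Shi : Fin T → ℝ) (t : Fin T) : ℝ :=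
  cumsum Plo t + (Finset.Ici t).inf' Finset.nonempty_Ici (fun τ => Shi τ - cumsum Plo τ)

lemma cs_mono {T : ℕ} (p q : Fin T → ℝ) (h : ∀ i, p i ≤ q i) {t σ : Fin T} (hts : t ≤ σ) :
    cumsum p σ - cumsum p t ≤ cumsum q σ - cumsum q t := by
  unfold cumsum
  have hsub : Finset.Iic t ⊆ Finset.Iic σ := Finset.Iic_subset_Iic.mpr hts
  rw [← Finset.sum_sdiff_eq_sub hsub, ← Finset.sum_sdiff_eq_sub hsub]
  exact Finset.sum_le_sum fun i _ => h i

/-- If the feasibility polytope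
`X = {p : P̲ ⪯ p ⪯ P̄, S̲ ⪯ Hp ⪯ S̄}` is nonempty (given the necessary conditions
`P̲ ⪯ P̄` and `H P̲ ⪯ S̲ ⪯ S̄ ⪯ H P̄`), then `B̲ ⪯ B̄`. -/
theorem feasibility_implies_envelopes (T : ℕ) (Plo Phi Slo Shi : Fin T → ℝ)
    (hP : ∀ t, Plo t ≤ Phi t)
    (hC : ∀ t, cumsum Plo t ≤ Slo t ∧ Slo t ≤ Shi t ∧ Shi t ≤ cumsum Phi t)
    (hX : ∃ p : Fin T → ℝ, ∀ t, Plo t ≤ p t ∧ p t ≤ Phi t ∧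
        Slo t ≤ cumsum p t ∧ cumsum p t ≤ Shi t) :
    ∀ t, Blo Phi Slo t ≤ Bhi Plo Shi t := by
  intro t
  obtain ⟨p, hp⟩ := hX
  unfold Blo Bhi
  have h1 : (Finset.Ici t).sup' Finset.nonempty_Ici (fun τ => Slo τ - cumsum Phi τ)
      ≤ cumsum p t - cumsum Phi t := by
    apply Finset.sup'_le
    intro σ hσ
    have hts : t ≤ σ := Finset.mem_Ici.mp hσ
    have h1 := (hp σ).2.2.1
    have h2 := cs_mono p Phi (fun i => (hp i).2.1) hts
    linarith
  have h2 : cumsum p t - cumsum Plo t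
      ≤ (Finset.Ici t).inf' Finset.nonempty_Ici (fun τ => Shi τ - cumsum Plo τ) := by
    apply Finset.le_inf'
    intro τ hτ
    have hts : t ≤ τ := Finset.mem_Ici.mp hτ
    have h1 := (hp τ).2.2.2
    have h2 := cs_mono Plo p (fun i => (hp i).1) hts
    linarith
  linarith
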